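/- Let F:Ω→Y be twice continuously differentiable on an open set Ω, x*∈Ω, β>0, and f:[0,R)→ℝ twice continuously differentiable with β‖F''(x)‖ ≤ f''(‖x−x*‖) for all x∈B(x*,R)∩Ω. If the segment from x* to x lies in Ω, then β‖F'(x) − F'(x*+τ(x−x*))‖ ≤ f'(‖x−x*‖) − f'(τ‖x−x*‖) for all τ∈[0,1]. -/

import Mathlib

/-- If `β ‖F''(y)‖ ≤ f''(‖y - x*‖)` on `B(x*, R) ∩ Ω` (with `f''` monotone), then
`F` and `f` satisfy the majorant condition
`β ‖F'(x) - F'(x* + τ(x - x*))‖ ≤ f'(‖x - x*‖) - f'(τ ‖x - x*‖)`. -/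
theorem stmt_18 {X Y : Type*}
    [NormedAddCommGroup X] [InnerProductSpace ℝ X] [CompleteSpace X]
    [NormedAddCommGroup Y] [InnerProductSpace ℝ Y] [CompleteSpace Y]
    (Ω : Set X) (hΩ : IsOpen Ω)
    (F : X → Y) (F' : X → X →L[ℝ] Y) (F'' : X → X →L[ℝ] X →L[ℝ] Y)
    (hF : ∀ y ∈ Ω, HasFDerivAt F (F' y) y)
    (hF' : ∀ y ∈ Ω, HasFDerivAt F' (F'' y) y)
    (hF'' : ContinuousOn F'' Ω)
    (xs : X) (hxs : xs ∈ Ω)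
    (β R : ℝ) (hβ : 0 < β) (hR : 0 < R)
    (f f' f'' : ℝ → ℝ)
    (hf : ∀ s ∈ Set.Ico 0 R, HasDerivAt f (f' s) s)
    (hf' : ∀ s ∈ Set.Ico 0 R, HasDerivAt f' (f'' s) s)
    (hf''c : ContinuousOn f'' (Set.Ico 0 R))
    (hf''mono : MonotoneOn f'' (Set.Ico 0 R))
    (hbound : ∀ y ∈ Metric.ball xs R ∩ Ω, β * ‖F'' y‖ ≤ f'' ‖y - xs‖)
    (x : X) (hxR : ‖x - xs‖ < R) (hseg : segment ℝ xs x ⊆ Ω) :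
    ∀ τ ∈ Set.Icc (0 : ℝ) 1,
      β * ‖F' x - F' (xs + τ • (x - xs))‖ ≤ f' ‖x - xs‖ - f' (τ * ‖x - xs‖) := by
  intro τ hτ
  set v := x - xs with hv
  set r := ‖x - xs‖ with hr
  have hr0 : (0:ℝ) ≤ r := norm_nonneg _
  -- segment membership
  have hγΩ : ∀ t ∈ Set.Icc (0:ℝ) 1, xs + t • v ∈ Ω := by
    intro t ht
    apply hseg
    rw [segment_eq_image']
    exact ⟨t, ht, rfl⟩
  have hnorm : ∀ t ∈ Set.Icc (0:ℝ) 1, ‖(xs + t • v) - xs‖ = t * r := by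
    intro t ht
    simp [norm_smul, abs_of_nonneg ht.1, hr, hv]
  have htr : ∀ t ∈ Set.Icc (0:ℝ) 1, t * r ∈ Set.Ico 0 R := by
    intro t ht
    constructor
    · exact mul_nonneg ht.1 hr0
    · calc t * r ≤ 1 * r := mul_le_mul_of_nonneg_right ht.2 hr0
        _ = r := one_mul r
        _ < R := hxR
  have hγball : ∀ t ∈ Set.Icc (0:ℝ) 1, xs + t • v ∈ Metric.ball xs R := by
    intro t ht
    rw [Metric.mem_ball, dist_eq_norm, hnorm t ht]
    exact (htr t ht).2
  -- derivative of g t = F' (xs + t • v)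
  have hg : ∀ t ∈ Set.Icc (0:ℝ) 1,
      HasDerivAt (fun t : ℝ => F' (xs + t • v)) ((F'' (xs + t • v)) v) t := by
    intro t ht
    have hd : HasDerivAt (fun s : ℝ => xs + s • v) v t := by
      simpa using ((hasDerivAt_id t).smul_const v).const_add xs
    exact (hF' _ (hγΩ t ht)).comp_hasDerivAt t hd
  -- derivative of B₀ t = f' (t * r)
  have hB0 : ∀ t ∈ Set.Icc (0:ℝ) 1,
      HasDerivAt (fun t : ℝ => f' (t * r)) (f'' (t * r) * r) t := by
    intro t ht
    exact (hf' _ (htr t ht)).comp t (hasDerivAt_mul_const r)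
  -- subset facts
  have hsub : Set.Icc τ 1 ⊆ Set.Icc (0:ℝ) 1 := by
    intro t ht
    exact ⟨le_trans hτ.1 ht.1, ht.2⟩
  have hsub' : Set.Ico τ 1 ⊆ Set.Icc (0:ℝ) 1 :=
    fun t ht => hsub ⟨ht.1, le_of_lt ht.2⟩
  -- main estimate via fencing lemma
  have key : ∀ s ∈ Set.Icc τ 1,
      ‖F' (xs + s • v) - F' (xs + τ • v)‖ ≤ (f' (s * r) - f' (τ * r)) / β := by
    refine image_norm_le_of_norm_deriv_right_le_deriv_boundary'
      (f := fun t => F' (xs + t • v) - F' (xs + τ • v))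
      (f' := fun t => (F'' (xs + t • v)) v)
      (B := fun t => (f' (t * r) - f' (τ * r)) / β)
      (B' := fun t => f'' (t * r) * r / β) ?_ ?_ ?_ ?_ ?_ ?_
    · intro t ht
      exact ((hg t (hsub ht)).continuousAt.continuousWithinAt).sub
        continuousWithinAt_const
    · intro t ht
      exact (((hg t (hsub' ht)).sub_const _).hasDerivWithinAt)
    · simp
    · intro t ht
      exact (((hB0 t (hsub ht)).sub_const _).div_const β).continuousAt.continuousWithinAt
    · intro t ht
      exact (((hB0 t (hsub' ht)).sub_const _).div_const β).hasDerivWithinAt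
    · intro t ht
      have hmem : xs + t • v ∈ Metric.ball xs R ∩ Ω :=
        ⟨hγball t (hsub' ht), hγΩ t (hsub' ht)⟩
      have hb := hbound _ hmem
      rw [hnorm t (hsub' ht)] at hb
      have h1 : ‖(F'' (xs + t • v)) v‖ ≤ ‖F'' (xs + t • v)‖ * r :=
        ContinuousLinearMap.le_opNorm _ _
      have h2 : ‖F'' (xs + t • v)‖ ≤ f'' (t * r) / β :=
        (le_div_iff₀ hβ).mpr (by linarith [hb])
      calc ‖(F'' (xs + t • v)) v‖ ≤ (f'' (t * r) / β) * r :=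
            le_trans h1 (mul_le_mul_of_nonneg_right h2 hr0)
        _ = f'' (t * r) * r / β := by ring
  have := key 1 ⟨hτ.2, le_refl 1⟩
  rw [one_smul, one_mul] at this
  have hxx : xs + v = x := by rw [hv]; abel
  rw [hxx] at this
  rw [mul_comm]
  exact (le_div_iff₀ hβ).mp this
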